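/- Let D ⊆ ℝ² be compact, star-shaped with respect to 0 (0 ∈ D and the segment [0, x] is contained in D for every x ∈ D), with 0 ∈ interior D. Set K_D = {x ∈ ℝ² : closedBall(x, ‖x‖) ⊆ D} and F_D = ⋃_{x ∈ K_D} closedBall(x, ‖x‖). Then: (a) F_D ⊆ D; (b) F_D is the Voronoi flower of the convex set 2·K_D with respect to the origin, i.e. F_D = F₀({2x : x ∈ K_D}); (c) F_D is the unique maximal Voronoi flower contained in D: for every nonempty compact convex set K' with 0 ∈ K' and F₀(K') ⊆ D, one has F₀(K') ⊆ F_D; (d) F_D = ℝ² \ i( (convexHull ℝ (ℝ² \ i(D \ {0}))) \ {0} ), where i is the inversion of pole 0 with respect to the unit circle. -/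

import Mathlib

open Metric Real Set MeasureTheory
open scoped RealInnerProductSpace

noncomputable section

/-- The Euclidean plane. -/
abbrev E2 := EuclideanSpace ℝ (Fin 2)

/-- The unit vector `u_θ = (cos θ, sin θ)`. -/
def uvec (θ : ℝ) : E2 := (WithLp.equiv 2 (Fin 2 → ℝ)).symm ![Real.cos θ, Real.sin θ]

/-- The vector `v_θ = (−sin θ, cos θ)`. -/
def vvec (θ : ℝ) : E2 := (WithLp.equiv 2 (Fin 2 → ℝ)).symm ![-Real.sin θ, Real.cos θ]

/-- The Voronoi flower of `L` with respect to `x`: the union over `s ∈ L` of the closed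
balls admitting the segment `[x, s]` as a diameter. -/
def vflower (x : E2) (L : Set E2) : Set E2 :=
  ⋃ s ∈ L, closedBall ((2:ℝ)⁻¹ • (x + s)) (‖s - x‖ / 2)

/-- The support function of `L` with respect to `x`: `p_x(L, w) = sup_{s ∈ L} ⟨s − x, w⟩`. -/
def suppf (x : E2) (L : Set E2) (w : E2) : ℝ :=
  sSup ((fun s => ⟪s - x, w⟫) '' L)

/-- for a compact star-shaped (w.r.t. `0`) set `D` with `0` in its
interior, the set `F_D = ⋃_{x ∈ K_D} closedBall x ‖x‖`, where
`K_D = {x : closedBall x ‖x‖ ⊆ D}`, satisfies: (a) `F_D ⊆ D`; (b) `F_D` is the Voronoi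
flower of the convex set `2·K_D`; (c) `F_D` is the unique maximal Voronoi flower
contained in `D`; (d) `F_D = ℝ² \ i(convexHull(ℝ² \ i(D \ {0})) \ {0})`. -/
local notation "Iv" => EuclideanGeometry.inversion (0:E2) 1

lemma isOpen_chull {U : Set E2} (hU : IsOpen U) : IsOpen (convexHull ℝ U) := by
  rw [← subset_interior_iff_isOpen]
  exact convexHull_min (interior_maximal (subset_convexHull ℝ U) hU) (convex_convexHull ℝ U).interior

lemma memball (x z : E2) : z ∈ closedBall x ‖x‖ ↔ ‖z‖^2 ≤ 2*⟪z,x⟫ := by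
  rw [mem_closedBall, dist_eq_norm]
  have h := @norm_sub_sq_real E2 _ _ z x
  constructor <;> intro h1 <;> nlinarith [norm_nonneg (z-x), norm_nonneg x]

lemma inv_apply_E2 (y : E2) : Iv y = (‖y‖^2)⁻¹ • y := by
  simp [EuclideanGeometry.inversion, dist_zero_right, inv_pow]

lemma inv_nz {y : E2} (hy : y ≠ 0) : Iv y ≠ 0 := by
  simpa [EuclideanGeometry.inversion_eq_center (one_ne_zero)] using hy

lemma invol (y : E2) : Iv (Iv y) = y :=
  EuclideanGeometry.inversion_inversion 0 one_ne_zero y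

lemma halfspace_to_ball {x v : E2} (h : 1 ≤ 2*⟪v,x⟫) : Iv v ∈ closedBall x ‖x‖ := by
  have hv : v ≠ 0 := by rintro rfl; simp at h; linarith
  have hn : (0:ℝ) < ‖v‖^2 := by have := norm_pos_iff.mpr hv; positivity
  rw [memball, inv_apply_E2, norm_smul, real_inner_smul_left, norm_inv, norm_pow, norm_norm, mul_pow]
  have key : ((‖v‖^2)⁻¹)^2 * ‖v‖^2 = (‖v‖^2)⁻¹ := by field_simp
  rw [key]
  calc (‖v‖^2)⁻¹ = (‖v‖^2)⁻¹ * 1 := by ring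
    _ ≤ (‖v‖^2)⁻¹ * (2*⟪v,x⟫) := mul_le_mul_of_nonneg_left h (by positivity)
    _ = 2 * ((‖v‖^2)⁻¹ * ⟪v,x⟫) := by ring

lemma ball_to_halfspace {x y : E2} (hy : y ≠ 0) (h : y ∈ closedBall x ‖x‖) :
    1 ≤ 2*⟪Iv y, x⟫ := by
  have hn : (0:ℝ) < ‖y‖^2 := by have := norm_pos_iff.mpr hy; positivity
  rw [memball] at h
  rw [inv_apply_E2, real_inner_smul_left]
  calc (1:ℝ) = (‖y‖^2)⁻¹ * ‖y‖^2 := by field_simp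
    _ ≤ (‖y‖^2)⁻¹ * (2*⟪y,x⟫) := mul_le_mul_of_nonneg_left h (by positivity)
    _ = 2 * ((‖y‖^2)⁻¹ * ⟪y,x⟫) := by ring

theorem maximal_flower (D : Set E2) (hDc : IsCompact D)
    (hstar : (0:E2) ∈ D ∧ ∀ x ∈ D, segment ℝ 0 x ⊆ D) (h0 : (0:E2) ∈ interior D)
    (KD FD : Set E2) (hKD : KD = {x : E2 | closedBall x ‖x‖ ⊆ D})
    (hFD : FD = ⋃ x ∈ KD, closedBall x ‖x‖) :
    FD ⊆ D ∧
    (Convex ℝ ((fun x : E2 => (2:ℝ) • x) '' KD) ∧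
      FD = vflower 0 ((fun x : E2 => (2:ℝ) • x) '' KD)) ∧
    (∀ K' : Set E2, K'.Nonempty → IsCompact K' → Convex ℝ K' → (0:E2) ∈ K' →
      vflower 0 K' ⊆ D → vflower 0 K' ⊆ FD) ∧
    FD = (EuclideanGeometry.inversion (0:E2) 1 ''
        ((convexHull ℝ ((EuclideanGeometry.inversion (0:E2) 1 '' (D \ {0}))ᶜ)) \ {0}))ᶜ := by
  subst hKD hFD
  have hsuba : (⋃ x ∈ {x : E2 | closedBall x ‖x‖ ⊆ D}, closedBall x ‖x‖) ⊆ D := by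
    intro y hy
    simp only [mem_iUnion, mem_setOf_eq] at hy
    obtain ⟨x, hx, hyx⟩ := hy
    exact hx hyx
  have hKconv : Convex ℝ {x : E2 | closedBall x ‖x‖ ⊆ D} := by
    intro x₁ h₁ x₂ h₂ a b ha hb hab z hz
    rw [memball, inner_add_right, real_inner_smul_right, real_inner_smul_right] at hz
    by_cases hc : ‖z‖^2 ≤ 2*⟪z,x₁⟫
    · exact h₁ ((memball x₁ z).mpr hc)
    · refine h₂ ((memball x₂ z).mpr ?_)
      push_neg at hc
      rcases eq_or_lt_of_le hb with hb0 | hb0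
      · exfalso
        subst hb0
        have ha1 : a = 1 := by linarith
        subst ha1
        simp only [one_mul, zero_mul, add_zero] at hz
        linarith
      · nlinarith
  refine ⟨hsuba, ⟨?_, ?_⟩, ?_, ?_⟩
  · rw [Set.image_smul]
    exact hKconv.smul 2
  · unfold vflower
    rw [Set.biUnion_image]
    refine iUnion₂_congr fun x _ => ?_
    have h1 : (2:ℝ)⁻¹ • ((0:E2) + (2:ℝ) • x) = x := by
      rw [zero_add, smul_smul]; norm_num
    have h2 : ‖(2:ℝ) • x - 0‖/2 = ‖x‖ := by
      rw [sub_zero, norm_smul]; simp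
    rw [h1, h2]
  · intro K' _ _ _ _ hsub y hy
    simp only [vflower, zero_add, sub_zero, mem_iUnion] at hy hsub
    obtain ⟨s, hs, hys⟩ := hy
    have hxn : ‖(2:ℝ)⁻¹ • s‖ = ‖s‖/2 := by
      rw [norm_smul]; simp [Real.norm_ofNat]; ring
    simp only [mem_iUnion, mem_setOf_eq]
    refine ⟨(2:ℝ)⁻¹ • s, ?_, ?_⟩
    · rw [hxn]
      intro z hz
      exact hsub (mem_biUnion hs hz)
    · rwa [hxn]
  · obtain ⟨R, hR⟩ := hDc.isBounded.subset_closedBall 0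
    set R' := max R 1 with hR'def
    have hR'pos : (0:ℝ) < R' := lt_of_lt_of_le one_pos (le_max_right _ _)
    have hDR : D ⊆ closedBall 0 R' := hR.trans (closedBall_subset_closedBall (le_max_left _ _))
    set A := Iv '' (D \ {0}) with hA
    have hnormI : ∀ z : E2, ‖Iv z‖ = ‖z‖⁻¹ := by
      intro z
      have := EuclideanGeometry.dist_inversion_center (0:E2) z 1
      simpa [dist_zero_right, one_div] using this
    have hmemA : ∀ z : E2, z ∈ A ↔ z ≠ 0 ∧ Iv z ∈ D := by
      intro z; constructor
      · rintro ⟨u, ⟨huD, hu0⟩, rfl⟩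
        refine ⟨inv_nz hu0, ?_⟩
        rw [invol]; exact huD
      · rintro ⟨hz0, hzD⟩
        exact ⟨Iv z, ⟨hzD, inv_nz hz0⟩, invol z⟩
    have hAeq : A = {z : E2 | R'⁻¹ ≤ ‖z‖} ∩ (Iv ⁻¹' D) := by
      ext z
      rw [mem_inter_iff, hmemA]
      constructor
      · rintro ⟨hz0, hzD⟩
        refine ⟨?_, hzD⟩
        have hz0' : (0:ℝ) < ‖z‖ := norm_pos_iff.mpr hz0
        have h1 : ‖z‖⁻¹ ≤ R' := by
          have := hDR hzD
          rw [mem_closedBall, dist_zero_right, hnormI] at this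
          exact this
        have hmul : (1:ℝ) ≤ R' * ‖z‖ := by
          have := mul_le_mul_of_nonneg_right h1 (le_of_lt hz0')
          rwa [inv_mul_cancel₀ (ne_of_gt hz0')] at this
        show R'⁻¹ ≤ ‖z‖
        calc R'⁻¹ = R'⁻¹ * 1 := by ring
          _ ≤ R'⁻¹ * (R' * ‖z‖) := mul_le_mul_of_nonneg_left hmul (by positivity)
          _ = ‖z‖ := by field_simp
      · rintro ⟨h1, h2⟩
        have hz0 : z ≠ 0 := by
          rintro rfl
          simp only [mem_setOf_eq, norm_zero] at h1
          nlinarith [inv_pos.mpr hR'pos]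
        exact ⟨hz0, h2⟩
    have hAclosed : IsClosed A := by
      rw [hAeq]
      have hs : IsClosed {z : E2 | R'⁻¹ ≤ ‖z‖} := isClosed_le continuous_const continuous_norm
      have hcont : ContinuousOn (fun z : E2 => Iv z) {z : E2 | R'⁻¹ ≤ ‖z‖} := by
        refine ContinuousOn.inversion continuousOn_const continuousOn_const continuousOn_id ?_
        intro a ha
        rintro rfl
        simp only [mem_setOf_eq, norm_zero] at ha
        nlinarith [inv_pos.mpr hR'pos]
      exact hcont.preimage_isClosed_of_isClosed hs hDc.isClosed
    have h0A : (0:E2) ∉ A := fun h => ((hmemA 0).mp h).1 rfl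
    set C := convexHull ℝ Aᶜ with hC
    have hCopen : IsOpen C := isOpen_chull hAclosed.isOpen_compl
    have h0C : (0:E2) ∈ C := subset_convexHull ℝ _ h0A
    ext y
    simp only [mem_compl_iff]
    constructor
    · intro hy
      simp only [mem_iUnion, mem_setOf_eq] at hy
      obtain ⟨x, hxK, hyx⟩ := hy
      rintro ⟨w, ⟨hwC, hw0⟩, hwy⟩
      have hw0' : w ≠ 0 := by simpa using hw0
      have hy0 : y ≠ 0 := hwy ▸ inv_nz hw0'
      have hAsub : Aᶜ ⊆ {v : E2 | 2*⟪v,x⟫ < 1} := by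
        intro v hv
        by_contra hge
        simp only [mem_setOf_eq, not_lt] at hge
        apply hv
        rw [hmemA]
        have hv0 : v ≠ 0 := by rintro rfl; simp at hge; linarith
        exact ⟨hv0, hxK (halfspace_to_ball hge)⟩
      have hHconv : Convex ℝ {v : E2 | 2*⟪v,x⟫ < 1} := by
        have hlin : IsLinearMap ℝ (fun v : E2 => 2*⟪v,x⟫) := by
          constructor
          · intro u v; rw [inner_add_left]; ring
          · intro c v; rw [real_inner_smul_left]; simp only [smul_eq_mul]; ring
        exact convex_halfSpace_lt hlin 1
      have hwH : 2*⟪w,x⟫ < 1 := convexHull_min hAsub hHconv hwC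
      have hge : 1 ≤ 2*⟪Iv y, x⟫ := ball_to_halfspace hy0 hyx
      rw [← hwy, invol] at hge
      linarith
    · intro hyc
      by_cases hy0 : y = 0
      · subst hy0
        simp only [mem_iUnion, mem_setOf_eq]
        refine ⟨0, ?_, by simp⟩
        intro z hz
        simp only [norm_zero, closedBall_zero, mem_singleton_iff] at hz
        rw [hz]; exact hstar.1
      · have hw0 : Iv y ≠ 0 := inv_nz hy0
        have hw0C : Iv y ∉ C := by
          intro h
          exact hyc ⟨Iv y, ⟨h, hw0⟩, invol y⟩
        obtain ⟨f, hf⟩ := geometric_hahn_banach_open_point (convex_convexHull ℝ _) hCopen hw0C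
        set c := f (Iv y) with hc
        have hcpos : 0 < c := by
          have := hf 0 h0C
          simpa using this
        set v := (InnerProductSpace.toDual ℝ E2).symm f with hv
        have hvf : ∀ z : E2, ⟪v, z⟫ = f z := fun z => InnerProductSpace.toDual_symm_apply
        set x := (2*c)⁻¹ • v with hx
        have hinner : ∀ z : E2, 2*⟪z,x⟫ = c⁻¹ * f z := by
          intro z
          rw [hx, real_inner_smul_right, real_inner_comm, hvf]
          field_simp
        have hyn : (0:ℝ) < ‖y‖^2 := by have := norm_pos_iff.mpr hy0; positivity
        have hxK : closedBall x ‖x‖ ⊆ D := by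
          intro z hz
          by_cases hz0 : z = 0
          · rw [hz0]; exact hstar.1
          · have hzn : (0:ℝ) < ‖z‖^2 := by have := norm_pos_iff.mpr hz0; positivity
            rw [memball, hinner] at hz
            have hfz : c * ‖z‖^2 ≤ f z := by
              have h2 := mul_le_mul_of_nonneg_left hz (le_of_lt hcpos)
              calc c*‖z‖^2 ≤ c * (c⁻¹ * f z) := h2
                _ = f z := by field_simp
            have hfIz : c ≤ f (Iv z) := by
              rw [← hvf, inv_apply_E2, real_inner_smul_right, hvf]
              calc c = (‖z‖^2)⁻¹ * (c * ‖z‖^2) := by field_simp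
                _ ≤ (‖z‖^2)⁻¹ * f z := mul_le_mul_of_nonneg_left hfz (by positivity)
            have hIzA : Iv z ∈ A := by
              by_contra hIz
              have hIzC : Iv z ∈ C := subset_convexHull ℝ _ hIz
              have := hf _ hIzC
              linarith
            rw [hmemA] at hIzA
            have h3 := hIzA.2
            rwa [invol] at h3
        simp only [mem_iUnion, mem_setOf_eq]
        refine ⟨x, hxK, ?_⟩
        rw [memball, hinner]
        have hfy : f y = c * ‖y‖^2 := by
          have h1 : c = (‖y‖^2)⁻¹ * f y := by
            rw [hc, ← hvf, inv_apply_E2, real_inner_smul_right, hvf]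
          field_simp at h1
          linarith
        rw [hfy]
        have : c⁻¹ * (c * ‖y‖^2) = ‖y‖^2 := by field_simp
        rw [this]
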